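/- The kernel of the derivation Δ = s ∂/∂t + t ∂/∂u on k[s,t,u,v] equals the k-subalgebra k[s, 2us − t^2, v]. -/

import Mathlib

open MvPolynomial

set_option linter.unusedSectionVars false

noncomputable section KDAux

namespace KDAux

variable {K : Type*} [Field K] [CharZero K]

def Θ (K : Type*) [Field K] : MvPolynomial (Fin 4) K →ₐ[K] MvPolynomial (Fin 4) K :=
  aeval ![X 0, X 1, 2 * X 2 * X 0 - X 1 ^ 2, X 3]

lemma Θ_X0 : Θ K (X 0) = X 0 := by simp [Θ]
lemma Θ_X1 : Θ K (X 1) = X 1 := by simp [Θ]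
lemma Θ_X2 : Θ K (X 2) = 2 * X 2 * X 0 - X 1 ^ 2 := by simp [Θ]
lemma Θ_X3 : Θ K (X 3) = X 3 := by simp [Θ]
lemma Θ_C (r : K) : Θ K (C r) = C r := by simp [Θ, algebraMap_eq]

lemma Θ_injective : Function.Injective (Θ K) := by
  classical
  let R := MvPolynomial (Fin 4) K
  let F := FractionRing R
  have hinj : Function.Injective (algebraMap R F) := IsFractionRing.injective R F
  let a : Fin 4 → F := fun i => algebraMap R F (X i)
  have h2a0 : (2 : F) * a 0 ≠ 0 := by
    have h2 : (2 : R) * X 0 ≠ 0 := mul_ne_zero two_ne_zero (MvPolynomial.X_ne_zero 0)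
    have hmap : algebraMap R F (2 * X 0) = 2 * a 0 := by
      rw [map_mul, map_ofNat]
    intro h
    apply h2
    apply hinj
    rw [hmap, h, map_zero]
  have ha0 : a 0 ≠ 0 := fun h => h2a0 (by rw [h, mul_zero])
  let η : R →+* F :=
    eval₂Hom ((algebraMap R F).comp (C : K →+* R))
      ![a 0, a 1, (a 2 + a 1 ^ 2) / (2 * a 0), a 3]
  have hηX : ∀ i, η (X i) = ![a 0, a 1, (a 2 + a 1 ^ 2) / (2 * a 0), a 3] i := fun i =>
    eval₂Hom_X' _ _ i
  have key : η.comp (Θ K : R →+* R) = algebraMap R F := by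
    apply MvPolynomial.ringHom_ext
    · intro r
      show η (Θ K (C r)) = algebraMap R F (C r)
      rw [Θ_C]
      exact eval₂Hom_C _ _ r
    · intro i
      fin_cases i
      · show η (Θ K (X 0)) = algebraMap R F (X 0)
        rw [Θ_X0, hηX 0]; rfl
      · show η (Θ K (X 1)) = algebraMap R F (X 1)
        rw [Θ_X1, hηX 1]; rfl
      · show η (Θ K (X 2)) = algebraMap R F (X 2)
        rw [Θ_X2]
        have e2 : η (2 * X 2 * X 0 - X 1 ^ 2)
            = 2 * ((a 2 + a 1 ^ 2) / (2 * a 0)) * a 0 - a 1 ^ 2 := by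
          rw [map_sub, map_mul, map_mul, map_pow, map_ofNat, hηX 0, hηX 1, hηX 2]
          rfl
        rw [e2]
        show _ = a 2
        rw [show (2 : F) * ((a 2 + a 1 ^ 2) / (2 * a 0)) * a 0 = a 2 + a 1 ^ 2 from by
          rw [mul_comm (2 : F), mul_assoc, div_mul_cancel₀ _ h2a0]]
        ring
      · show η (Θ K (X 3)) = algebraMap R F (X 3)
        rw [Θ_X3, hηX 3]; rfl
  intro x y hxy
  apply hinj
  have kx := RingHom.congr_fun key x
  have ky := RingHom.congr_fun key y
  rw [RingHom.comp_apply] at kx ky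
  rw [← kx, ← ky]
  show η (Θ K x) = η (Θ K y)
  rw [hxy]


lemma coeff_pderiv_one (g : MvPolynomial (Fin 4) K) (m : Fin 4 →₀ ℕ) :
    coeff m (pderiv 1 g) = ((m 1 : K) + 1) * coeff (m + Finsupp.single 1 1) g := by
  induction g using MvPolynomial.induction_on' with
  | monomial n a =>
    rw [pderiv_monomial, coeff_monomial, coeff_monomial]
    by_cases hn : n = m + Finsupp.single 1 1
    · subst hn
      have h1 : m + Finsupp.single 1 1 - Finsupp.single 1 1 = m := by
        ext j
        by_cases hj : (1 : Fin 4) = j <;>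
          simp [Finsupp.tsub_apply, Finsupp.single_apply, hj]
      have h2 : (m + Finsupp.single 1 1 : Fin 4 →₀ ℕ) 1 = m 1 + 1 := by simp
      rw [if_pos h1, h2]
      push_cast
      simp only [if_true]
      ring
    · rw [if_neg hn]
      by_cases hd : n - Finsupp.single 1 1 = m
      · rw [if_pos hd]
        by_cases hn1 : n 1 = 0
        · simp [hn1]
        · exfalso
          apply hn
          ext j
          have hdj := DFunLike.congr_fun hd j
          rw [Finsupp.tsub_apply] at hdj
          by_cases hj : (1 : Fin 4) = j
          · subst hj
            simp only [Finsupp.single_eq_same] at hdj ⊢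
            simp only [Finsupp.add_apply, Finsupp.single_eq_same]
            omega
          · simp only [Finsupp.single_apply, hj, if_false] at hdj
            simp only [Finsupp.add_apply, Finsupp.single_apply, hj, if_false]
            omega
      · rw [if_neg hd, mul_zero]
  | add p q hp hq =>
    simp only [map_add, coeff_add, hp, hq]
    ring

lemma supported_of_pderiv_one_eq_zero {g : MvPolynomial (Fin 4) K}
    (hg : pderiv 1 g = 0) : g ∈ supported K ({0, 2, 3} : Set (Fin 4)) := by
  have key : ∀ m : Fin 4 →₀ ℕ, m 1 ≠ 0 → coeff m g = 0 := by
    intro m hm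
    set m' := m - Finsupp.single 1 1 with hm'
    have hmm : m' + Finsupp.single 1 1 = m := by
      ext j
      by_cases hj : (1 : Fin 4) = j
      · subst hj
        simp only [Finsupp.add_apply, Finsupp.single_eq_same, hm', Finsupp.tsub_apply]
        omega
      · simp only [Finsupp.add_apply, Finsupp.single_apply, hj, if_false, hm',
          Finsupp.tsub_apply]
        omega
    have hc := coeff_pderiv_one g m'
    rw [hg, coeff_zero, hmm] at hc
    have hne : ((m' 1 : K) + 1) ≠ 0 := by
      have he : ((m' 1 : K) + 1) = ((m' 1 + 1 : ℕ) : K) := by push_cast; ring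
      rw [he]
      exact Nat.cast_ne_zero.mpr (Nat.succ_ne_zero (m' 1))
    exact (mul_eq_zero.mp hc.symm).resolve_left hne
  rw [mem_supported]
  intro i hi
  rw [Finset.mem_coe, mem_vars] at hi
  obtain ⟨m, hm, him⟩ := hi
  have hmi : m i ≠ 0 := Finsupp.mem_support_iff.mp him
  have hi1 : i ≠ 1 := by
    intro h
    subst h
    exact (MvPolynomial.mem_support_iff.mp hm) (key m hmi)
  fin_cases i <;> simp_all


lemma delta_two {R : Type*} [CommRing R] [Algebra K R]
    (Δ : Derivation K R R) : Δ (2 : R) = 0 := by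
  rw [show (2 : R) = 1 + 1 by norm_num, map_add, Derivation.map_one_eq_zero, add_zero]

variable (Δ : Derivation K (MvPolynomial (Fin 4) K) (MvPolynomial (Fin 4) K))
  (hΔs : Δ (X 0) = 0) (hΔt : Δ (X 1) = X 0) (hΔu : Δ (X 2) = X 1)
  (hΔv : Δ (X 3) = 0)

include hΔs hΔt hΔu in
lemma delta_w : Δ (2 * X 2 * X 0 - X 1 ^ 2) = 0 := by
  have h2 : Δ (2 : MvPolynomial (Fin 4) K) = 0 := delta_two Δ
  have hsq : (X 1 : MvPolynomial (Fin 4) K) ^ 2 = X 1 * X 1 := sq (X 1)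
  rw [map_sub, hsq]
  simp only [Derivation.leibniz, hΔs, hΔt, hΔu, h2, smul_eq_mul]
  ring

lemma delta_C (a : K) : Δ (C a) = 0 := by
  have : (C a : MvPolynomial (Fin 4) K) = algebraMap K _ a := by
    rw [algebraMap_eq]
  rw [this, Derivation.map_algebraMap]

include hΔs hΔt hΔu hΔv in
lemma delta_Theta (g : MvPolynomial (Fin 4) K) :
    Δ (Θ K g) = X 0 * Θ K (pderiv 1 g) := by
  induction g using MvPolynomial.induction_on with
  | C a =>
    rw [Θ_C, pderiv_C, map_zero, mul_zero, delta_C]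
  | add p q hp hq =>
    rw [map_add, map_add, map_add, map_add, hp, hq]
    ring
  | mul_X p i hp =>
    rw [map_mul, Derivation.leibniz, smul_eq_mul, smul_eq_mul, hp, pderiv_mul,
      map_add, map_mul, map_mul]
    fin_cases i
    · show Θ K p * Δ (Θ K (X 0)) + Θ K (X 0) * (X 0 * Θ K (pderiv 1 p))
        = X 0 * (Θ K (pderiv 1 p) * Θ K (X 0) + Θ K p * Θ K (pderiv 1 (X 0)))
      rw [Θ_X0, hΔs, pderiv_X_of_ne (by decide : (0 : Fin 4) ≠ 1), map_zero]
      ring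
    · show Θ K p * Δ (Θ K (X 1)) + Θ K (X 1) * (X 0 * Θ K (pderiv 1 p))
        = X 0 * (Θ K (pderiv 1 p) * Θ K (X 1) + Θ K p * Θ K (pderiv 1 (X 1)))
      rw [Θ_X1, hΔt, pderiv_X_self, map_one]
      ring
    · show Θ K p * Δ (Θ K (X 2)) + Θ K (X 2) * (X 0 * Θ K (pderiv 1 p))
        = X 0 * (Θ K (pderiv 1 p) * Θ K (X 2) + Θ K p * Θ K (pderiv 1 (X 2)))
      rw [Θ_X2, delta_w Δ hΔs hΔt hΔu, pderiv_X_of_ne (by decide : (2 : Fin 4) ≠ 1),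
        map_zero]
      ring
    · show Θ K p * Δ (Θ K (X 3)) + Θ K (X 3) * (X 0 * Θ K (pderiv 1 p))
        = X 0 * (Θ K (pderiv 1 p) * Θ K (X 3) + Θ K p * Θ K (pderiv 1 (X 3)))
      rw [Θ_X3, hΔv, pderiv_X_of_ne (by decide : (3 : Fin 4) ≠ 1), map_zero]
      ring

lemma exists_pow_theta (f : MvPolynomial (Fin 4) K) :
    ∃ (n : ℕ) (g : MvPolynomial (Fin 4) K),
      (X 0 : MvPolynomial (Fin 4) K) ^ n * f = Θ K g := by
  induction f using MvPolynomial.induction_on with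
  | C a => exact ⟨0, C a, by rw [pow_zero, one_mul, Θ_C]⟩
  | add p q hp hq =>
    obtain ⟨n, g, hg⟩ := hp
    obtain ⟨n', g', hg'⟩ := hq
    refine ⟨n + n', Θ K (X 0) ^ n' * g + Θ K (X 0) ^ n * g', ?_⟩
    rw [map_add, map_mul, map_mul, map_pow, map_pow, ← hg, ← hg', Θ_X0, Θ_X0]
    ring
  | mul_X p i hp =>
    obtain ⟨n, g, hg⟩ := hp
    fin_cases i
    · refine ⟨n, g * X 0, ?_⟩
      show X 0 ^ n * (p * X 0) = Θ K (g * X 0)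
      rw [map_mul, Θ_X0, ← hg]; ring
    · refine ⟨n, g * X 1, ?_⟩
      show X 0 ^ n * (p * X 1) = Θ K (g * X 1)
      rw [map_mul, Θ_X1, ← hg]; ring
    · refine ⟨n + 1, g * (C (2⁻¹ : K) * (X 2 + X 1 ^ 2)), ?_⟩
      show X 0 ^ (n + 1) * (p * X 2) = Θ K (g * (C (2⁻¹ : K) * (X 2 + X 1 ^ 2)))
      rw [map_mul, map_mul, map_add, Θ_C, Θ_X2, map_pow, Θ_X1, ← hg]
      have h1 : (2 * X 2 * X 0 - X 1 ^ 2 + X 1 ^ 2 : MvPolynomial (Fin 4) K)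
          = C (2 : K) * (X 2 * X 0) := by
        rw [map_ofNat]
        ring
      rw [h1, show (C (2⁻¹:K) : MvPolynomial (Fin 4) K) * (C (2:K) * (X 2 * X 0))
        = (C (2⁻¹:K) * C (2:K)) * (X 2 * X 0) from by ring, ← C_mul]
      norm_num
      ring
    · refine ⟨n, g * X 3, ?_⟩
      show X 0 ^ n * (p * X 3) = Θ K (g * X 3)
      rw [map_mul, Θ_X3, ← hg]; ring


def θ3 (K : Type*) [Field K] : MvPolynomial (Fin 3) K →ₐ[K] MvPolynomial (Fin 4) K :=
  aeval ![X 0, 2 * X 2 * X 0 - X 1 ^ 2, X 3]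

lemma X0_dvd_sub (P : MvPolynomial (Fin 3) K) :
    (X 0 : MvPolynomial (Fin 3) K) ∣ P - aeval ![0, X 1, X 2] P := by
  induction P using MvPolynomial.induction_on with
  | C a =>
    have : (aeval ![0, X 1, X 2] : MvPolynomial (Fin 3) K →ₐ[K] MvPolynomial (Fin 3) K) (C a)
        = C a := by
      rw [show (C a : MvPolynomial (Fin 3) K) = algebraMap K _ a from (algebraMap_eq K (Fin 3)) ▸ rfl]
      exact AlgHom.commutes _ a
    rw [this, sub_self]
    exact dvd_zero _
  | add p q hp hq =>
    have := dvd_add hp hq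
    rw [map_add]
    convert this using 1
    ring
  | mul_X p i hp =>
    rw [map_mul]
    fin_cases i
    · show (X 0 : MvPolynomial (Fin 3) K) ∣ p * X 0 - aeval ![0, X 1, X 2] p * aeval ![0, X 1, X 2] (X 0)
      rw [aeval_X, show (![0, X 1, X 2] : Fin 3 → MvPolynomial (Fin 3) K) 0 = 0 from rfl,
        mul_zero, sub_zero]
      exact Dvd.intro_left p rfl
    · show (X 0 : MvPolynomial (Fin 3) K) ∣ p * X 1 - aeval ![0, X 1, X 2] p * aeval ![0, X 1, X 2] (X 1)
      rw [aeval_X, show (![0, X 1, X 2] : Fin 3 → MvPolynomial (Fin 3) K) 1 = X 1 from rfl]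
      have h : p * X 1 - aeval ![0, X 1, X 2] p * X 1
          = (p - aeval ![0, X 1, X 2] p) * X 1 := by ring
      rw [h]
      exact hp.mul_right _
    · show (X 0 : MvPolynomial (Fin 3) K) ∣ p * X 2 - aeval ![0, X 1, X 2] p * aeval ![0, X 1, X 2] (X 2)
      rw [aeval_X, show (![0, X 1, X 2] : Fin 3 → MvPolynomial (Fin 3) K) 2 = X 2 from rfl]
      have h : p * X 2 - aeval ![0, X 1, X 2] p * X 2
          = (p - aeval ![0, X 1, X 2] p) * X 2 := by ring
      rw [h]
      exact hp.mul_right _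

lemma aeval_eq_eval' (y : Fin 3 → K) (p : MvPolynomial (Fin 3) K) :
    (aeval y : MvPolynomial (Fin 3) K →ₐ[K] K) p = eval y p := by
  rw [← coe_aeval_eq_eval]
  rfl

lemma saturation (h : MvPolynomial (Fin 4) K) (P : MvPolynomial (Fin 3) K)
    (hP : X 0 * h = θ3 K P) : ∃ Q : MvPolynomial (Fin 3) K, h = θ3 K Q := by
  have hρ : ((aeval ![0, X 1, X 2, X 3] : MvPolynomial (Fin 4) K →ₐ[K] MvPolynomial (Fin 4) K).comp
      (θ3 K)) = aeval ![0, -(X 1 : MvPolynomial (Fin 4) K) ^ 2, X 3] := by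
    apply MvPolynomial.algHom_ext
    intro i
    fin_cases i <;> simp [θ3] <;> ring
  have h0 : aeval ![(0 : MvPolynomial (Fin 4) K), -(X 1) ^ 2, X 3] P = 0 := by
    rw [← hρ, AlgHom.comp_apply, ← hP, map_mul]
    simp
  have hB : ∀ y1 y2 : K, (aeval ![0, y1, y2] : MvPolynomial (Fin 3) K →ₐ[K] K) P = 0 := by
    intro y1 y2
    set q : Polynomial K := aeval ![(0 : Polynomial K), Polynomial.X, Polynomial.C y2] P with hq
    have hψ : ((aeval ![0, Polynomial.X, 0, Polynomial.C y2] :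
        MvPolynomial (Fin 4) K →ₐ[K] Polynomial K).comp
        (aeval ![(0 : MvPolynomial (Fin 4) K), -(X 1) ^ 2, X 3] :
          MvPolynomial (Fin 3) K →ₐ[K] MvPolynomial (Fin 4) K)) =
        aeval ![0, -Polynomial.X ^ 2, Polynomial.C y2] := by
      apply MvPolynomial.algHom_ext
      intro i
      fin_cases i <;> simp
    have hcomp : ((Polynomial.aeval (-Polynomial.X ^ 2 : Polynomial K) :
        Polynomial K →ₐ[K] Polynomial K).comp
        (aeval ![(0 : Polynomial K), Polynomial.X, Polynomial.C y2] :
          MvPolynomial (Fin 3) K →ₐ[K] Polynomial K)) =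
        aeval ![0, -Polynomial.X ^ 2, Polynomial.C y2] := by
      apply MvPolynomial.algHom_ext
      intro i
      fin_cases i <;> simp
    have hq0 : Polynomial.aeval (-Polynomial.X ^ 2 : Polynomial K) q = 0 := by
      rw [hq, ← AlgHom.comp_apply, hcomp, ← hψ, AlgHom.comp_apply, h0, map_zero]
    have hqcomp : q.comp (-Polynomial.X ^ 2) = 0 := by
      rw [Polynomial.comp, ← Polynomial.algebraMap_eq]
      rw [← Polynomial.aeval_def, hq0]
    have hqz : q = 0 := by
      rcases Polynomial.comp_eq_zero_iff.mp hqcomp with h | ⟨_, h⟩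
      · exact h
      · exfalso
        have := congrArg Polynomial.natDegree h
        rw [Polynomial.natDegree_neg, Polynomial.natDegree_X_pow,
          Polynomial.natDegree_C] at this
        exact two_ne_zero this
    have hχ : ((Polynomial.aeval y1 : Polynomial K →ₐ[K] K).comp
        (aeval ![(0 : Polynomial K), Polynomial.X, Polynomial.C y2] :
          MvPolynomial (Fin 3) K →ₐ[K] Polynomial K)) =
        aeval ![0, y1, y2] := by
      apply MvPolynomial.algHom_ext
      intro i
      fin_cases i <;> simp
    rw [← hχ, AlgHom.comp_apply, ← hq, hqz, map_zero]
  have hC : (aeval ![0, X 1, X 2] : MvPolynomial (Fin 3) K →ₐ[K] MvPolynomial (Fin 3) K) P = 0 := by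
    apply MvPolynomial.funext
    intro y
    have hcy : ((aeval y : MvPolynomial (Fin 3) K →ₐ[K] K).comp
        (aeval ![0, X 1, X 2] : MvPolynomial (Fin 3) K →ₐ[K] MvPolynomial (Fin 3) K)) =
        aeval ![0, y 1, y 2] := by
      apply MvPolynomial.algHom_ext
      intro i
      fin_cases i <;> simp [aeval_eq_eval']
    rw [← aeval_eq_eval', ← AlgHom.comp_apply, hcy, hB, map_zero]
  obtain ⟨Q, hQ⟩ : (X 0 : MvPolynomial (Fin 3) K) ∣ P := by
    have := X0_dvd_sub (K := K) P
    rwa [hC, sub_zero] at this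
  refine ⟨Q, ?_⟩
  have hθX0 : θ3 K (X 0) = X 0 := by simp [θ3]
  have hcancel : X 0 * h = X 0 * θ3 K Q := by
    rw [hP, hQ, map_mul, hθX0]
  exact mul_left_cancel₀ (MvPolynomial.X_ne_zero 0) hcancel

lemma pow_saturation (n : ℕ) (h : MvPolynomial (Fin 4) K)
    (hmem : (X 0 : MvPolynomial (Fin 4) K) ^ n * h ∈ (θ3 K).range) : h ∈ (θ3 K).range := by
  induction n generalizing h with
  | zero => simpa using hmem
  | succ n ih =>
    apply ih
    obtain ⟨P, hP⟩ := hmem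
    have hP' : θ3 K P = X 0 ^ (n + 1) * h := hP
    have : X 0 * (X 0 ^ n * h) = θ3 K P := by rw [hP']; ring
    obtain ⟨Q, hQ⟩ := saturation _ P this
    exact ⟨Q, hQ.symm⟩


end KDAux

end KDAux

open KDAux in
theorem kernel_of_Delta_binary_forms
    (K : Type*) [Field K] [CharZero K]
    (Δ : Derivation K (MvPolynomial (Fin 4) K) (MvPolynomial (Fin 4) K))
    (hΔs : Δ (X 0) = 0) (hΔt : Δ (X 1) = X 0) (hΔu : Δ (X 2) = X 1)
    (hΔv : Δ (X 3) = 0) :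
    ∀ f : MvPolynomial (Fin 4) K,
      Δ f = 0 ↔
        f ∈ Algebra.adjoin K
          ({X 0, 2 * X 2 * X 0 - X 1 ^ 2, X 3} :
            Set (MvPolynomial (Fin 4) K)) := by
  intro f
  have hadj_range : Algebra.adjoin K
      ({X 0, 2 * X 2 * X 0 - X 1 ^ 2, X 3} : Set (MvPolynomial (Fin 4) K))
      = (θ3 K).range := by
    have hset : ({X 0, 2 * X 2 * X 0 - X 1 ^ 2, X 3} : Set (MvPolynomial (Fin 4) K))
        = Set.range ![X 0, 2 * X 2 * X 0 - X 1 ^ 2, X 3] := by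
      ext x
      constructor
      · rintro (rfl | rfl | rfl)
        · exact ⟨0, rfl⟩
        · exact ⟨1, rfl⟩
        · exact ⟨2, rfl⟩
      · rintro ⟨i, rfl⟩
        fin_cases i
        · exact Or.inl rfl
        · exact Or.inr (Or.inl rfl)
        · exact Or.inr (Or.inr rfl)
    rw [hset, Algebra.adjoin_range_eq_range_aeval]
    rfl
  constructor
  · -- forward direction
    intro hf
    obtain ⟨n, g, hg⟩ := exists_pow_theta f
    have hΔpow : Δ ((X 0 : MvPolynomial (Fin 4) K) ^ n * f) = 0 := by
      rw [Derivation.leibniz, hf, Derivation.leibniz_pow, hΔs]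
      simp
    have hkey : (X 0 : MvPolynomial (Fin 4) K) * Θ K (pderiv 1 g) = 0 := by
      rw [← delta_Theta Δ hΔs hΔt hΔu hΔv, ← hg, hΔpow]
    have hΘp : Θ K (pderiv 1 g) = 0 :=
      (mul_eq_zero.mp hkey).resolve_left (MvPolynomial.X_ne_zero 0)
    have hpd : pderiv 1 g = 0 := by
      apply Θ_injective
      rw [hΘp, map_zero]
    have hsup : g ∈ supported K ({0, 2, 3} : Set (Fin 4)) :=
      supported_of_pderiv_one_eq_zero hpd
    have himg : Θ K g ∈ Algebra.adjoin K
        ({X 0, 2 * X 2 * X 0 - X 1 ^ 2, X 3} : Set (MvPolynomial (Fin 4) K)) := by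
      have h1 : Θ K g ∈ (Algebra.adjoin K
          ((X : Fin 4 → MvPolynomial (Fin 4) K) '' {0, 2, 3})).map (Θ K) :=
        ⟨g, hsup, rfl⟩
      rw [AlgHom.map_adjoin] at h1
      have h2 : Θ K '' ((X : Fin 4 → MvPolynomial (Fin 4) K) '' {0, 2, 3})
          = ({X 0, 2 * X 2 * X 0 - X 1 ^ 2, X 3} : Set (MvPolynomial (Fin 4) K)) := by
        simp only [Set.image_insert_eq, Set.image_singleton, Θ_X0, Θ_X2, Θ_X3]
      rwa [h2] at h1
    rw [hadj_range] at himg ⊢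
    rw [← hg] at himg
    exact pow_saturation n f himg
  · -- backward direction
    intro hf
    induction hf using Algebra.adjoin_induction with
    | mem x hx =>
      rcases hx with rfl | rfl | rfl
      · exact hΔs
      · exact delta_w Δ hΔs hΔt hΔu
      · exact hΔv
    | algebraMap r => exact Derivation.map_algebraMap Δ r
    | add x y hx hy hx' hy' => rw [map_add, hx', hy', add_zero]
    | mul x y hx hy hx' hy' => rw [Derivation.leibniz, hx', hy', smul_zero, smul_zero, add_zero]
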